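/- The complex open unit disk D = {z ∈ ℂ : |z| < 1} with Möbius addition a ⊕ b = (a + b)/(1 + conj(a)·b) is a gyrogroup, with gyr[a,b](c) = ((1 + a·conj(b))/(1 + conj(a)·b))·c, which is not a group (the operation is not associative). -/

import Mathlib

universe u

/-- A gyrogroup: a set with a binary operation `+`, a (unique) two-sided identity `0`,
(unique) two-sided inverses `-x`, and gyroautomorphisms `gyr x y` satisfying the
left gyroassociative law and the left loop property. -/
class Gyrogroup (G : Type u) extends Add G, Zero G, Neg G where
  gyr : G → G → G → G
  zero_add : ∀ a : G, 0 + a = a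
  add_zero : ∀ a : G, a + 0 = a
  zero_unique : ∀ e : G, (∀ a : G, e + a = a ∧ a + e = a) → e = 0
  neg_add : ∀ a : G, -a + a = 0
  add_neg : ∀ a : G, a + -a = 0
  neg_unique : ∀ a b : G, (b + a = 0 ∧ a + b = 0) → b = -a
  gyr_bijective : ∀ x y : G, Function.Bijective (gyr x y)
  gyr_add : ∀ x y a b : G, gyr x y (a + b) = gyr x y a + gyr x y b
  add_gyroassoc : ∀ x y z : G, x + (y + z) = x + y + gyr x y z
  gyr_left_loop : ∀ x y : G, gyr (x + y) y = gyr x y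

open Gyrogroup

/-- A topological gyrogroup: a gyrogroup with a topology making `+` jointly
continuous and negation continuous. -/
class TopologicalGyrogroup (G : Type u) [TopologicalSpace G] [Gyrogroup G] : Prop where
  continuous_add : Continuous fun p : G × G => p.1 + p.2
  continuous_neg : Continuous fun x : G => -x

/-- `gadd A B = {a + b : a ∈ A, b ∈ B}`. -/
def gadd {G : Type u} [Gyrogroup G] (A B : Set G) : Set G := Set.image2 (· + ·) A B

/-- `gneg A = {-a : a ∈ A}`. -/
def gneg {G : Type u} [Gyrogroup G] (A : Set G) : Set G := (fun x : G => -x) '' A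

/-- A subgyrogroup: a nonempty subset closed under `+` and negation. -/
def IsSubgyrogroup {G : Type u} [Gyrogroup G] (H : Set G) : Prop :=
  H.Nonempty ∧ (∀ x ∈ H, -x ∈ H) ∧ ∀ x ∈ H, ∀ y ∈ H, x + y ∈ H

/-- An L-subgyrogroup: a subgyrogroup with `gyr a h '' H = H` for all `a ∈ G`, `h ∈ H`. -/
def IsLSubgyrogroup {G : Type u} [Gyrogroup G] (H : Set G) : Prop :=
  IsSubgyrogroup H ∧ ∀ a : G, ∀ h ∈ H, gyr a h '' H = H

section MobiusAux
open Complex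
lemma mob_normSq_lt_one {a : ℂ} (h : ‖a‖ < 1) : normSq a < 1 := by
  rw [← Complex.sq_norm]; nlinarith [norm_nonneg a]

lemma mob_key (a b : ℂ) :
    normSq (1 + (starRingEnd ℂ) a * b) - normSq (a + b)
      = (1 - normSq a) * (1 - normSq b) := by
  simp only [Complex.normSq_apply, Complex.add_re, Complex.add_im, Complex.mul_re,
    Complex.mul_im, Complex.one_re, Complex.one_im, Complex.conj_re, Complex.conj_im]
  ring

lemma mob_denom_ne {a b : ℂ} (ha : ‖a‖ < 1) (hb : ‖b‖ < 1) :
    1 + (starRingEnd ℂ) a * b ≠ 0 := by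
  intro h
  have h1 : normSq (1 + (starRingEnd ℂ) a * b) = 0 := by rw [h]; simp
  have := mob_key a b
  have := mob_normSq_lt_one ha
  have := mob_normSq_lt_one hb
  have := Complex.normSq_nonneg (a + b)
  nlinarith

lemma mob_mem {a b : ℂ} (ha : ‖a‖ < 1) (hb : ‖b‖ < 1) :
    ‖(a + b) / (1 + (starRingEnd ℂ) a * b)‖ < 1 := by
  rw [norm_div, div_lt_one (norm_pos_iff.mpr (mob_denom_ne ha hb))]
  have h := mob_key a b
  have h1 := mob_normSq_lt_one ha
  have h2 := mob_normSq_lt_one hb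
  have h3 : normSq (a + b) < normSq (1 + (starRingEnd ℂ) a * b) := by nlinarith
  have := Real.sqrt_lt_sqrt (Complex.normSq_nonneg _) h3
  simpa [Complex.norm_def] using this

lemma mob_u_mul_conj {x y : ℂ} (hx : ‖x‖ < 1) (hy : ‖y‖ < 1) :
    ((1 + x * (starRingEnd ℂ) y) / (1 + (starRingEnd ℂ) x * y)) *
      (starRingEnd ℂ) ((1 + x * (starRingEnd ℂ) y) / (1 + (starRingEnd ℂ) x * y)) = 1 := by
  have h1 := mob_denom_ne hx hy
  have h2 : (1 + x * (starRingEnd ℂ) y) ≠ 0 := by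
    intro h
    apply mob_denom_ne hx hy
    have := congrArg (starRingEnd ℂ) h
    simpa using this
  simp only [map_div₀, map_add, map_mul, map_one, Complex.conj_conj]
  field_simp

lemma mob_abs_u {x y : ℂ} (hx : ‖x‖ < 1) (hy : ‖y‖ < 1) :
    ‖(1 + x * (starRingEnd ℂ) y) / (1 + (starRingEnd ℂ) x * y)‖ = 1 := by
  have := congrArg (‖·‖) (mob_u_mul_conj hx hy)
  rw [norm_mul, Complex.norm_conj, norm_one] at this
  nlinarith [norm_nonneg ((1 + x * (starRingEnd ℂ) y) / (1 + (starRingEnd ℂ) x * y))]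

lemma mob_gyr_mem {x y c : ℂ} (hx : ‖x‖ < 1) (hy : ‖y‖ < 1)
    (hc : ‖c‖ < 1) :
    ‖(1 + x * (starRingEnd ℂ) y) / (1 + (starRingEnd ℂ) x * y) * c‖ < 1 := by
  rw [norm_mul, mob_abs_u hx hy, one_mul]; exact hc

lemma mob_num_ne {x y : ℂ} (hx : ‖x‖ < 1) (hy : ‖y‖ < 1) :
    1 + x * (starRingEnd ℂ) y ≠ 0 := by
  intro h
  apply mob_denom_ne hx hy
  have := congrArg (starRingEnd ℂ) h
  simpa using this

end MobiusAux

noncomputable def mobGyro : Gyrogroup {z : ℂ // ‖z‖ < 1} where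
  add a b := ⟨((a : ℂ) + b) / (1 + (starRingEnd ℂ) (a : ℂ) * b), mob_mem a.2 b.2⟩
  zero := ⟨0, by norm_num⟩
  neg a := ⟨-(a : ℂ), by simpa using a.2⟩
  gyr x y c := ⟨(1 + (x : ℂ) * (starRingEnd ℂ) (y : ℂ)) / (1 + (starRingEnd ℂ) (x : ℂ) * y) * c,
    mob_gyr_mem x.2 y.2 c.2⟩
  zero_add a := by
    ext
    show ((0:ℂ) + a) / (1 + (starRingEnd ℂ) (0:ℂ) * a) = (a:ℂ)
    simp
  add_zero a := by
    ext
    show ((a:ℂ) + 0) / (1 + (starRingEnd ℂ) (a:ℂ) * 0) = (a:ℂ)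
    simp
  zero_unique e h := by
    have h3 : ((e:ℂ) + 0) / (1 + (starRingEnd ℂ) (e:ℂ) * 0) = 0 :=
      congrArg Subtype.val (h ⟨0, by norm_num⟩).1
    ext
    show (e:ℂ) = 0
    simpa using h3
  neg_add a := by
    ext
    show (-(a:ℂ) + a) / (1 + (starRingEnd ℂ) (-(a:ℂ)) * a) = 0
    simp
  add_neg a := by
    ext
    show ((a:ℂ) + -a) / (1 + (starRingEnd ℂ) (a:ℂ) * -(a:ℂ)) = 0
    simp
  neg_unique a b h := by
    have hd := mob_denom_ne b.2 a.2
    ext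
    show (b:ℂ) = -(a:ℂ)
    have h3 : ((b:ℂ) + a) / (1 + (starRingEnd ℂ) (b:ℂ) * a) = 0 := congrArg Subtype.val h.1
    rw [div_eq_zero_iff] at h3
    rcases h3 with h3 | h3
    · linear_combination h3
    · exact absurd h3 hd
  gyr_bijective x y := by
    constructor
    · intro a b h
      have h2 := congrArg Subtype.val h
      simp only at h2
      ext
      have hu : (1 + (x : ℂ) * (starRingEnd ℂ) (y : ℂ)) / (1 + (starRingEnd ℂ) (x : ℂ) * y) ≠ 0 :=
        div_ne_zero (mob_num_ne x.2 y.2) (mob_denom_ne x.2 y.2)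
      exact mul_left_cancel₀ hu h2
    · intro d
      refine ⟨⟨(starRingEnd ℂ) ((1 + (x : ℂ) * (starRingEnd ℂ) (y : ℂ)) / (1 + (starRingEnd ℂ) (x : ℂ) * y)) * d, ?_⟩, ?_⟩
      · rw [norm_mul, Complex.norm_conj, mob_abs_u x.2 y.2, one_mul]; exact d.2
      · ext
        show (1 + (x : ℂ) * (starRingEnd ℂ) (y : ℂ)) / (1 + (starRingEnd ℂ) (x : ℂ) * y) *
          ((starRingEnd ℂ) ((1 + (x : ℂ) * (starRingEnd ℂ) (y : ℂ)) / (1 + (starRingEnd ℂ) (x : ℂ) * y)) * d) = (d:ℂ)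
        rw [← mul_assoc, mob_u_mul_conj x.2 y.2, one_mul]
  gyr_add x y a b := by
    ext
    have key := mob_u_mul_conj x.2 y.2
    show (1 + (x : ℂ) * (starRingEnd ℂ) (y : ℂ)) / (1 + (starRingEnd ℂ) (x : ℂ) * y) *
        (((a:ℂ) + b) / (1 + (starRingEnd ℂ) (a:ℂ) * b))
      = ((1 + (x : ℂ) * (starRingEnd ℂ) (y : ℂ)) / (1 + (starRingEnd ℂ) (x : ℂ) * y) * a
          + (1 + (x : ℂ) * (starRingEnd ℂ) (y : ℂ)) / (1 + (starRingEnd ℂ) (x : ℂ) * y) * b)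
        / (1 + (starRingEnd ℂ) ((1 + (x : ℂ) * (starRingEnd ℂ) (y : ℂ)) / (1 + (starRingEnd ℂ) (x : ℂ) * y) * a)
            * ((1 + (x : ℂ) * (starRingEnd ℂ) (y : ℂ)) / (1 + (starRingEnd ℂ) (x : ℂ) * y) * b))
    rw [map_mul,
      show (starRingEnd ℂ) ((1 + (x : ℂ) * (starRingEnd ℂ) (y : ℂ)) / (1 + (starRingEnd ℂ) (x : ℂ) * y))
            * (starRingEnd ℂ) (a:ℂ)
          * ((1 + (x : ℂ) * (starRingEnd ℂ) (y : ℂ)) / (1 + (starRingEnd ℂ) (x : ℂ) * y) * (b:ℂ))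
        = ((1 + (x : ℂ) * (starRingEnd ℂ) (y : ℂ)) / (1 + (starRingEnd ℂ) (x : ℂ) * y)
            * (starRingEnd ℂ) ((1 + (x : ℂ) * (starRingEnd ℂ) (y : ℂ)) / (1 + (starRingEnd ℂ) (x : ℂ) * y)))
          * ((starRingEnd ℂ) (a:ℂ) * b) from by ring,
      key, one_mul, ← mul_add, mul_div_assoc]
  add_gyroassoc x y z := by
    ext
    have h1 := mob_denom_ne x.2 y.2
    have h2 := mob_num_ne x.2 y.2
    have h3 := mob_denom_ne y.2 z.2
    have h4 : (1 : ℂ) + (starRingEnd ℂ) (x:ℂ) * (((y:ℂ)+z)/(1+(starRingEnd ℂ) (y:ℂ)*z)) ≠ 0 :=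
      mob_denom_ne x.2 (mob_mem y.2 z.2)
    have h5 : (1 : ℂ) + (starRingEnd ℂ) (((x:ℂ)+y)/(1+(starRingEnd ℂ) (x:ℂ)*y)) *
        ((1 + (x : ℂ) * (starRingEnd ℂ) (y : ℂ)) / (1 + (starRingEnd ℂ) (x : ℂ) * y) * z) ≠ 0 :=
      mob_denom_ne (mob_mem x.2 y.2) (mob_gyr_mem x.2 y.2 z.2)
    show ((x:ℂ) + ((y:ℂ)+z)/(1+(starRingEnd ℂ) (y:ℂ)*z))
        / (1 + (starRingEnd ℂ) (x:ℂ) * (((y:ℂ)+z)/(1+(starRingEnd ℂ) (y:ℂ)*z)))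
      = ((((x:ℂ)+y)/(1+(starRingEnd ℂ) (x:ℂ)*y))
          + (1 + (x : ℂ) * (starRingEnd ℂ) (y : ℂ)) / (1 + (starRingEnd ℂ) (x : ℂ) * y) * z)
        / (1 + (starRingEnd ℂ) (((x:ℂ)+y)/(1+(starRingEnd ℂ) (x:ℂ)*y)) *
            ((1 + (x : ℂ) * (starRingEnd ℂ) (y : ℂ)) / (1 + (starRingEnd ℂ) (x : ℂ) * y) * z))
    rw [div_eq_div_iff h4 h5]
    simp only [map_div₀, map_add, map_mul, map_one, Complex.conj_conj]
    have h1' : 1 + (y:ℂ) * (starRingEnd ℂ) (x:ℂ) ≠ 0 := by rwa [mul_comm]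
    have h3' : 1 + (z:ℂ) * (starRingEnd ℂ) (y:ℂ) ≠ 0 := by rwa [mul_comm]
    field_simp
    ring
  gyr_left_loop x y := by
    funext c
    ext
    have h1 := mob_denom_ne x.2 y.2
    have h2 := mob_num_ne x.2 y.2
    have hp : (1:ℂ) + (((x:ℂ)+y)/(1+(starRingEnd ℂ) (x:ℂ)*y)) * (starRingEnd ℂ) (y:ℂ) ≠ 0 :=
      mob_num_ne (mob_mem x.2 y.2) y.2
    have hq : (1:ℂ) + (starRingEnd ℂ) (((x:ℂ)+y)/(1+(starRingEnd ℂ) (x:ℂ)*y)) * y ≠ 0 :=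
      mob_denom_ne (mob_mem x.2 y.2) y.2
    show (1 + (((x:ℂ)+y)/(1+(starRingEnd ℂ) (x:ℂ)*y)) * (starRingEnd ℂ) (y:ℂ))
        / (1 + (starRingEnd ℂ) (((x:ℂ)+y)/(1+(starRingEnd ℂ) (x:ℂ)*y)) * y) * c
      = (1 + (x : ℂ) * (starRingEnd ℂ) (y : ℂ)) / (1 + (starRingEnd ℂ) (x : ℂ) * y) * c
    have huu : (1 + (((x:ℂ)+y)/(1+(starRingEnd ℂ) (x:ℂ)*y)) * (starRingEnd ℂ) (y:ℂ))
        / (1 + (starRingEnd ℂ) (((x:ℂ)+y)/(1+(starRingEnd ℂ) (x:ℂ)*y)) * y)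
      = (1 + (x : ℂ) * (starRingEnd ℂ) (y : ℂ)) / (1 + (starRingEnd ℂ) (x : ℂ) * y) := by
      rw [div_eq_div_iff hq h1]
      simp only [map_div₀, map_add, map_mul, map_one, Complex.conj_conj]
      have h1' : 1 + (y:ℂ) * (starRingEnd ℂ) (x:ℂ) ≠ 0 := by rwa [mul_comm]
      field_simp
      ring
    rw [huu]


theorem stmt12 :
    ∃ inst : Gyrogroup {z : ℂ // ‖z‖ < 1},
      (∀ a b : {z : ℂ // ‖z‖ < 1},
        ((@HAdd.hAdd _ _ _ (@instHAdd _ inst.toAdd) a b : {z : ℂ // ‖z‖ < 1}) : ℂ)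
          = ((a : ℂ) + (b : ℂ)) / (1 + (starRingEnd ℂ) (a : ℂ) * (b : ℂ))) ∧
      (∀ a b c : {z : ℂ // ‖z‖ < 1},
        ((inst.gyr a b c : {z : ℂ // ‖z‖ < 1}) : ℂ)
          = ((1 + (a : ℂ) * (starRingEnd ℂ) (b : ℂ)) / (1 + (starRingEnd ℂ) (a : ℂ) * (b : ℂ)))
              * (c : ℂ)) ∧
      ¬ (∀ a b c : {z : ℂ // ‖z‖ < 1},
          @HAdd.hAdd _ _ _ (@instHAdd _ inst.toAdd)
              (@HAdd.hAdd _ _ _ (@instHAdd _ inst.toAdd) a b) c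
            = @HAdd.hAdd _ _ _ (@instHAdd _ inst.toAdd) a
                (@HAdd.hAdd _ _ _ (@instHAdd _ inst.toAdd) b c)) := by
  refine ⟨mobGyro, fun a b => rfl, fun a b c => rfl, ?_⟩
  intro h
  have hhalf : ‖(1/2 : ℂ)‖ < 1 := by
    rw [norm_div, norm_one, Complex.norm_two]; norm_num
  have hI2 : ‖(Complex.I/2 : ℂ)‖ < 1 := by
    rw [norm_div, Complex.norm_I, Complex.norm_two]; norm_num
  have h' := congrArg Subtype.val (h ⟨1/2, hhalf⟩ ⟨Complex.I/2, hI2⟩ ⟨1/2, hhalf⟩)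
  have h'' :
      (((1/2:ℂ) + Complex.I/2)/(1 + (starRingEnd ℂ) (1/2:ℂ) * (Complex.I/2)) + 1/2)
        / (1 + (starRingEnd ℂ) (((1/2:ℂ) + Complex.I/2)/(1 + (starRingEnd ℂ) (1/2:ℂ) * (Complex.I/2))) * (1/2))
      = ((1/2:ℂ) + (Complex.I/2 + 1/2)/(1 + (starRingEnd ℂ) (Complex.I/2:ℂ) * (1/2)))
        / (1 + (starRingEnd ℂ) (1/2:ℂ) * ((Complex.I/2 + 1/2)/(1 + (starRingEnd ℂ) (Complex.I/2:ℂ) * (1/2)))) := h'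
  norm_num [Complex.ext_iff, Complex.div_re, Complex.div_im, Complex.normSq_apply,
    Complex.conj_re, Complex.conj_im, Complex.add_re, Complex.add_im, Complex.mul_re,
    Complex.mul_im] at h''
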